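/- For any integer n > 1 and any prime p ≡ 1 (mod q) with q > 0, the p-adic valuation of gcd_{0<k≤n} C(qn+1, qk) equals 1 if α_p(qn+1) = 1 (i.e., qn+1 is a power of p), and equals 0 otherwise. -/

import Mathlib

lemma sumdig_pow_mul' {p : ℕ} (hp : 1 < p) (s x : ℕ) (hx : 0 < x) :
    (Nat.digits p (p ^ s * x)).sum = (Nat.digits p x).sum := by
  rw [Nat.digits_base_pow_mul hp hx]
  simp

lemma sumdig_eq_zero' {p : ℕ} (hp : 1 < p) : ∀ x, (Nat.digits p x).sum = 0 → x = 0 := by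
  intro x
  induction x using Nat.strong_induction_on with
  | _ x ih =>
    intro h
    rcases Nat.eq_zero_or_pos x with rfl | hx
    · rfl
    · rw [Nat.digits_def' hp hx, List.sum_cons] at h
      have h1 : x / p = 0 := ih (x / p) (Nat.div_lt_self hx hp) (by omega)
      have h2 := Nat.div_add_mod x p
      rw [h1, Nat.mul_zero] at h2
      omega

lemma sumdig_eq_one' {p : ℕ} (hp : 1 < p) : ∀ x, (Nat.digits p x).sum = 1 → ∃ m, x = p ^ m := by
  intro x
  induction x using Nat.strong_induction_on with
  | _ x ih =>
    intro h
    have hx : 0 < x := by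
      rcases Nat.eq_zero_or_pos x with rfl | hx
      · simp at h
      · exact hx
    rw [Nat.digits_def' hp hx, List.sum_cons] at h
    have hdm := Nat.div_add_mod x p
    rcases Nat.eq_zero_or_pos (x % p) with h0 | h1
    · have hd : 0 < x / p := by
        rcases Nat.eq_zero_or_pos (x / p) with h2 | h2
        · rw [h2, Nat.mul_zero] at hdm
          omega
        · exact h2
      obtain ⟨m, hm⟩ := ih (x / p) (Nat.div_lt_self hx hp) (by omega)
      refine ⟨m + 1, ?_⟩
      rw [pow_succ, ← hm]
      exact (Nat.div_mul_cancel (Nat.dvd_of_mod_eq_zero h0)).symm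
    · have h2 : x / p = 0 := sumdig_eq_zero' hp (x / p) (by omega)
      rw [h2, Nat.mul_zero] at hdm
      refine ⟨0, ?_⟩
      rw [pow_zero]
      omega

theorem stmt_19 (n q p : ℕ) (hn : 1 < n) (hq : 0 < q) (hp : p.Prime)
    (hcong : p % q = 1 % q) :
    padicValNat p (Finset.gcd (Finset.Ioc 0 n) (fun k => Nat.choose (q * n + 1) (q * k))) =
      if (Nat.digits p (q * n + 1)).sum = 1 then 1 else 0 := by
  haveI : Fact p.Prime := ⟨hp⟩
  have hp1 : 1 < p := hp.one_lt
  set N := q * n + 1 with hNdef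
  have hN3 : 3 ≤ N := by
    have : 2 ≤ n := hn
    nlinarith
  have hqp : q < p := by
    rcases Nat.eq_or_lt_of_le hq with h1 | h1
    · omega
    · have h1m : 1 % q = 1 := Nat.mod_eq_of_lt h1
      by_contra hge
      push_neg at hge
      rcases Nat.eq_or_lt_of_le hge with h2 | h2
      · rw [h2, Nat.mod_self] at hcong; omega
      · rw [Nat.mod_eq_of_lt h2] at hcong; omega
  by_cases hα : (Nat.digits p N).sum = 1
  · rw [if_pos hα]
    obtain ⟨m, hm⟩ := sumdig_eq_one' hp1 N hα
    have hm1 : 1 ≤ m := by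
      by_contra h
      push_neg at h
      interval_cases m
      · simp at hm; omega
    set P := p ^ (m - 1) with hPdef
    have hP1 : 1 ≤ P := Nat.one_le_pow _ _ hp.pos
    have hPp : P * p = p ^ m := by
      rw [hPdef, ← pow_succ]
      congr 1
      omega
    -- q * P ≤ q * n
    have hjle : q * P ≤ q * n := by
      have h1 : q * P ≤ (p - 1) * P := Nat.mul_le_mul_right P (by omega)
      have h2 : (p - 1) * P = P * p - P := by
        rw [Nat.sub_mul, one_mul, mul_comm]
      omega
    have hk0le : P ≤ n := Nat.le_of_mul_le_mul_left hjle hq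
    have hmem : P ∈ Finset.Ioc 0 n := Finset.mem_Ioc.mpr ⟨Nat.pow_pos hp.pos, hk0le⟩
    have hjN : q * P ≤ N := by omega
    -- digit sums
    have hαj : (Nat.digits p (q * P)).sum = q := by
      rw [mul_comm, hPdef, sumdig_pow_mul' hp1 _ _ hq,
        Nat.digits_of_lt p q (by omega) hqp]
      simp
    have hsub : N - q * P = P * (p - q) := by
      rw [Nat.mul_sub, hPp, ← hm, mul_comm P q]
    have hαsub : (Nat.digits p (N - q * P)).sum = p - q := by
      have hpq : 0 < p - q := by omega
      rw [hsub, hPdef, sumdig_pow_mul' hp1 (m - 1) (p - q) hpq,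
        Nat.digits_of_lt p (p - q) (by omega) (by omega)]
      simp
    have hv : padicValNat p (Nat.choose N (q * P)) = 1 := by
      have h := sub_one_mul_padicValNat_choose_eq_sub_sum_digits (p := p) hjN
      rw [hαj, hαsub, hα] at h
      have h2 : (p - 1) * padicValNat p (Nat.choose N (q * P)) = (p - 1) * 1 := by omega
      exact Nat.eq_of_mul_eq_mul_left (by omega) h2
    set G := Finset.gcd (Finset.Ioc 0 n) (fun k => Nat.choose (q * n + 1) (q * k)) with hGdef
    have hgdvd : G ∣ Nat.choose N (q * P) := Finset.gcd_dvd hmem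
    have hCpos : 0 < Nat.choose N (q * P) := Nat.choose_pos hjN
    have hG0 : G ≠ 0 := by
      rintro h
      rw [h] at hgdvd
      rw [zero_dvd_iff] at hgdvd
      omega
    have hpd : p ∣ G := by
      apply Finset.dvd_gcd
      intro k hk
      rw [Finset.mem_Ioc] at hk
      have hk1 : q * k ≠ 0 := Nat.mul_ne_zero (by omega) (by omega)
      have hk2 : q * k ≠ p ^ m := by
        have : q * k ≤ q * n := Nat.mul_le_mul_left q hk.2
        omega
      have := hp.dvd_choose_pow hk1 hk2
      rwa [← hm] at this
    have h1le : 1 ≤ padicValNat p G := one_le_padicValNat_of_dvd hG0 hpd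
    have h2nd : ¬ (2 ≤ padicValNat p G) := by
      intro h2
      have hdd : p ^ 2 ∣ G := (padicValNat_dvd_iff_le hG0).mpr h2
      have hdC : p ^ 2 ∣ Nat.choose N (q * P) := hdd.trans hgdvd
      have := (padicValNat_dvd_iff_le (by omega : Nat.choose N (q * P) ≠ 0)).mp hdC
      omega
    omega
  · rw [if_neg hα]
    have hN0 : N ≠ 0 := by omega
    have hα2 : 2 ≤ (Nat.digits p N).sum := by
      have h0 : (Nat.digits p N).sum ≠ 0 := fun h => hN0 (sumdig_eq_zero' hp1 N h)
      omega
    set s := N.factorization p with hsdef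
    set M := N / p ^ s with hMdef
    have hfac : p ^ s * M = N := Nat.ordProj_mul_ordCompl_eq_self N p
    have hpM : ¬ p ∣ M := Nat.not_dvd_ordCompl hp hN0
    have hM0 : 0 < M := by
      rcases Nat.eq_zero_or_pos M with h | h
      · rw [h, mul_zero] at hfac; omega
      · exact h
    have hMd : (Nat.digits p M).sum = (Nat.digits p N).sum := by
      have h := (sumdig_pow_mul' hp1 s M hM0).symm
      rwa [hfac] at h
    have hM2 : 2 ≤ M := by
      by_contra h
      push_neg at h
      have hM1 : M = 1 := by omega
      rw [hM1, Nat.digits_of_lt p 1 (by omega) hp1] at hMd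
      simp at hMd
      omega
    have hr : M % p ≠ 0 := fun h => hpM (Nat.dvd_of_mod_eq_zero h)
    have hrlt : M % p < p := Nat.mod_lt _ hp.pos
    have hdm := Nat.div_add_mod M p
    have hdig1 : Nat.digits p M = M % p :: Nat.digits p (M / p) :=
      Nat.digits_def' hp1 hM0
    have hdig2 : Nat.digits p (M - 1) = (M % p - 1) :: Nat.digits p (M / p) := by
      have h1 : M - 1 = (M % p - 1) + p * (M / p) := by omega
      have hor : M % p - 1 ≠ 0 ∨ M / p ≠ 0 := by
        by_contra hcon
        push_neg at hcon
        obtain ⟨ha, hb⟩ := hcon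
        rw [hb, Nat.mul_zero] at hdm
        omega
      rw [h1]
      exact Nat.digits_add p hp1 _ _ (by omega) hor
    have hsum : (Nat.digits p (M - 1)).sum + 1 = (Nat.digits p M).sum := by
      rw [hdig1, hdig2, List.sum_cons, List.sum_cons]
      omega
    have hP1 : 1 ≤ p ^ s := Nat.one_le_pow _ _ hp.pos
    have hslt : p ^ s < N := by
      calc p ^ s < p ^ s * 2 := by omega
        _ ≤ p ^ s * M := Nat.mul_le_mul_left _ hM2
        _ = N := hfac
    have hjq : q ∣ N - p ^ s := by
      have h1 : p ^ s % q = 1 % q := by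
        have h2 : p ^ s ≡ 1 ^ s [MOD q] := Nat.ModEq.pow s hcong
        rwa [one_pow] at h2
      have h2 : N % q = 1 % q := by
        rw [hNdef, Nat.add_comm, Nat.add_mul_mod_self_left]
      exact (Nat.modEq_iff_dvd' (le_of_lt hslt)).mp (h1.trans h2.symm)
    obtain ⟨k₀, hk₀⟩ := hjq
    have hk₀pos : 0 < k₀ := by
      rcases Nat.eq_zero_or_pos k₀ with h | h
      · rw [h, mul_zero] at hk₀; omega
      · exact h
    have hk₀len : k₀ ≤ n := by
      have h1 : q * k₀ ≤ q * n := by omega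
      exact Nat.le_of_mul_le_mul_left h1 hq
    have hk₀mem : k₀ ∈ Finset.Ioc 0 n := Finset.mem_Ioc.mpr ⟨hk₀pos, hk₀len⟩
    have hjfac : q * k₀ = p ^ s * (M - 1) := by
      rw [Nat.mul_sub, Nat.mul_one, hfac]
      omega
    have hjsum : (Nat.digits p (q * k₀)).sum + 1 = (Nat.digits p N).sum := by
      rw [hjfac, sumdig_pow_mul' hp1 s (M - 1) (by omega)]
      omega
    have hNsub : N - q * k₀ = p ^ s := by omega
    have hps1 : (Nat.digits p (p ^ s)).sum = 1 := by
      have h1 := sumdig_pow_mul' hp1 s 1 one_pos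
      rw [mul_one, Nat.digits_of_lt p 1 (by omega) hp1] at h1
      simpa using h1
    have hvz : padicValNat p (Nat.choose N (q * k₀)) = 0 := by
      have hle : q * k₀ ≤ N := by omega
      have h := sub_one_mul_padicValNat_choose_eq_sub_sum_digits (p := p) hle
      rw [hNsub, hps1] at h
      have h2 : (p - 1) * padicValNat p (Nat.choose N (q * k₀)) = 0 := by omega
      rcases Nat.mul_eq_zero.mp h2 with h3 | h3
      · omega
      · exact h3
    have hCpos : 0 < Nat.choose N (q * k₀) := Nat.choose_pos (by omega)
    have hpnd : ¬ p ∣ Nat.choose N (q * k₀) := by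
      intro hd
      have := one_le_padicValNat_of_dvd hCpos.ne' hd
      omega
    have hng : ¬ p ∣ Finset.gcd (Finset.Ioc 0 n) (fun k => Nat.choose (q * n + 1) (q * k)) :=
      fun h => hpnd (h.trans (Finset.gcd_dvd hk₀mem))
    exact padicValNat.eq_zero_of_not_dvd hng
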